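/- arXiv:1201.1963 — 2 statements merged into one kernel-verified Lean document; each statement's English description precedes it below -/
import Mathlib

section
/- Alternative formulation of the relativistic Euler equations (Proposition 2.1): Let ρ > 0 and u¹,u²,u³ be C¹ functions on an open subset of [1,∞)×ℝ³, with u⁰, u_a, Π^{μν}, L as in the context. Then the coordinate form of the relativistic Euler equations with equation of state p = c²ρ relative to g, namely u^α∂_α ln ρ + (1+c²)∂_α u^α + 3(1+c²)ω u⁰ = 0 and u^α∂_α u^j + 2ω u⁰u^j + (c²/(1+c²))Π^{jα}∂_α ln ρ = 0 (j=1,2,3) — these are u^αD_α ln ρ + (1+c²)D_α u^α = 0 and u^αD_α u^j + (c²/(1+c²))Π^{jα}D_α ln ρ = 0 with the Levi-Civita connection D of g expanded in coordinates — holds if and only if (L,u¹,u²,u³) satisfies equations (P) and (U_j). Furthermore, in that case u⁰ satisfies u^α∂_α u⁰ + (c²/(1+c²))Π^{0α}∂_α L = ω(3c²−1)e^{2Ω}δ_{ab}u^a u^b. -/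
noncomputable section
open MeasureTheory Real Filter Metric

/-- Space = ℝ³ (Euclidean). -/
abbrev Space : Type := EuclideanSpace ℝ (Fin 3)
/-- Spacetime = ℝ × ℝ³, first coordinate is time `t`. -/
abbrev Spacetime : Type := ℝ × Space

/-- spatial coordinate unit vector -/
def e3 (i : Fin 3) : Space := EuclideanSpace.single i (1 : ℝ)

/-- spacetime coordinate directions: `dir4 0` is the time direction. -/
def dir4 : Fin 4 → ℝ × Space := fun μ => Fin.cases ((1 : ℝ), (0 : Space)) (fun i => ((0 : ℝ), e3 i)) μ

/-- spacetime coordinate partial derivative ∂_μ -/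
def pd (μ : Fin 4) (f : Spacetime → ℝ) (p : Spacetime) : ℝ := fderiv ℝ f p (dir4 μ)

/-- ∂_t -/
def pdt (f : Spacetime → ℝ) (p : Spacetime) : ℝ := fderiv ℝ f p ((1 : ℝ), (0 : Space))

/-- spatial partial derivative ∂_i of a spacetime function -/
def pds (i : Fin 3) (f : Spacetime → ℝ) (p : Spacetime) : ℝ := fderiv ℝ f p ((0 : ℝ), e3 i)

/-- spatial partial derivative of a function on space -/
def spd (i : Fin 3) (f : Space → ℝ) (x : Space) : ℝ := fderiv ℝ f x (e3 i)

/-- multi-index spatial derivative ∂_α, α = (α₁,α₂,α₃) -/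
def mpd (α : ℕ × ℕ × ℕ) (f : Space → ℝ) : Space → ℝ :=
  (spd 0)^[α.1] ((spd 1)^[α.2.1] ((spd 2)^[α.2.2] f))

/-- multi-index spatial derivative of a spacetime function -/
def mpdST (α : ℕ × ℕ × ℕ) (f : Spacetime → ℝ) : Spacetime → ℝ :=
  (pds 0)^[α.1] ((pds 1)^[α.2.1] ((pds 2)^[α.2.2] f))

/-- order |α| of a spatial multi-index -/
def mdeg (α : ℕ × ℕ × ℕ) : ℕ := α.1 + α.2.1 + α.2.2

/-- the finite set of spatial multi-indices of order ≤ N -/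
def midxLe (N : ℕ) : Finset (ℕ × ℕ × ℕ) :=
  (Finset.range (N+1) ×ˢ Finset.range (N+1) ×ˢ Finset.range (N+1)).filter (fun α => mdeg α ≤ N)

/-- the finite set of spatial multi-indices of order = N -/
def midxEq (N : ℕ) : Finset (ℕ × ℕ × ℕ) :=
  (Finset.range (N+1) ×ˢ Finset.range (N+1) ×ˢ Finset.range (N+1)).filter (fun α => mdeg α = N)

/-- ‖f‖²_{H^N} = Σ_{|α|≤N} ∫ |∂_α f|² -/
def HNormSq (N : ℕ) (f : Space → ℝ) : ℝ := ∑ α ∈ midxLe N, ∫ x : Space, (mpd α f x)^2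

/-- the Sobolev norm ‖f‖_{H^N} -/
def HNorm (N : ℕ) (f : Space → ℝ) : ℝ := Real.sqrt (HNormSq N f)

/-- membership f ∈ H^N (finiteness of the norm), with classical derivatives -/
def InHN (N : ℕ) (f : Space → ℝ) : Prop := ∀ α ∈ midxLe N, MemLp (mpd α f) 2 volume

/-- the restriction f(t,·) -/
def tslice (f : Spacetime → ℝ) (t : ℝ) : Space → ℝ := fun x => f (t, x)

/-- u⁰ := (1 + e^{2Ω}δ_{ab}u^au^b)^{1/2} -/
def u0 (Ω : ℝ → ℝ) (u : Fin 3 → Spacetime → ℝ) (p : Spacetime) : ℝ :=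
  Real.sqrt (1 + Real.exp (2 * Ω p.1) * ∑ a, (u a p)^2)

/-- the four-velocity (u⁰,u¹,u²,u³) with u⁰ determined by the normalization -/
def Uup (Ω : ℝ → ℝ) (u : Fin 3 → Spacetime → ℝ) : Fin 4 → Spacetime → ℝ :=
  fun μ => Fin.cases (u0 Ω u) u μ

/-- inverse metric (g⁻¹)^{μν}: diag(−1, e^{−2Ω}, e^{−2Ω}, e^{−2Ω}) -/
def ginv (Ω : ℝ → ℝ) (p : Spacetime) (μ ν : Fin 4) : ℝ :=
  if μ = 0 ∧ ν = 0 then -1 else if μ = ν then Real.exp (-(2 * Ω p.1)) else 0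

/-- metric g_{μν} = diag(−1, e^{2Ω}, e^{2Ω}, e^{2Ω}) -/
def gmet (Ω : ℝ → ℝ) (p : Spacetime) (μ ν : Fin 4) : ℝ :=
  if μ = 0 ∧ ν = 0 then -1 else if μ = ν then Real.exp (2 * Ω p.1) else 0

/-- Π^{μν} := u^μ u^ν + (g⁻¹)^{μν} -/
def PiUp (Ω : ℝ → ℝ) (u : Fin 3 → Spacetime → ℝ) (p : Spacetime) (μ ν : Fin 4) : ℝ :=
  Uup Ω u μ p * Uup Ω u ν p + ginv Ω p μ ν

/-- ω := dΩ/dt -/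
def omg (Ω : ℝ → ℝ) (t : ℝ) : ℝ := deriv Ω t

/-- equation (P) at a point -/
def eqnP (Ω : ℝ → ℝ) (c : ℝ) (L : Spacetime → ℝ) (u : Fin 3 → Spacetime → ℝ) (p : Spacetime) :
    Prop :=
  (∑ μ, Uup Ω u μ p * pd μ L p)
      + (1 + c^2) * (∑ a, (Real.exp (2 * Ω p.1) * u a p / u0 Ω u p) * pdt (u a) p)
      + (1 + c^2) * (∑ a, pds a (u a) p)
    = -(omg Ω p.1 * (1 + c^2) * (Real.exp (2 * Ω p.1) * ∑ a, (u a p)^2) / u0 Ω u p)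

/-- equation (U_j) at a point -/
def eqnU (Ω : ℝ → ℝ) (c : ℝ) (L : Spacetime → ℝ) (u : Fin 3 → Spacetime → ℝ) (j : Fin 3)
    (p : Spacetime) : Prop :=
  (∑ μ, Uup Ω u μ p * pd μ (u j) p)
      + (c^2 / (1 + c^2)) * (∑ μ, PiUp Ω u p j.succ μ * pd μ L p)
    = omg Ω p.1 * (3 * c^2 - 2) * u0 Ω u p * u j p

/-- the spacetime slab [1,T) × ℝ³ -/
def slab (T : ℝ) : Set Spacetime := Set.Ico (1 : ℝ) T ×ˢ Set.univ

/-- the modified relativistic Euler system holds pointwise on the slab -/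
def SolutionOn (Ω : ℝ → ℝ) (c : ℝ) (T : ℝ) (L : Spacetime → ℝ)
    (u : Fin 3 → Spacetime → ℝ) : Prop :=
  ∀ p ∈ slab T, eqnP Ω c L u p ∧ ∀ j, eqnU Ω c L u j p

/-- f ∈ C⁰([1,T), H^N) -/
def C0H (N : ℕ) (T : ℝ) (f : Spacetime → ℝ) : Prop :=
  (∀ t ∈ Set.Ico (1 : ℝ) T, InHN N (tslice f t)) ∧
  ∀ t₀ ∈ Set.Ico (1 : ℝ) T, ∀ ε > 0, ∃ δ > 0, ∀ t ∈ Set.Ico (1 : ℝ) T,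
    |t - t₀| < δ → HNorm N (fun x => f (t, x) - f (t₀, x)) < ε

/-- classical solution on [1,T)×ℝ³ with the regularity of the local existence theorem -/
def RegSol (Ω : ℝ → ℝ) (c : ℝ) (N : ℕ) (T : ℝ) (L : Spacetime → ℝ)
    (u : Fin 3 → Spacetime → ℝ) : Prop :=
  (if c^2 = 0 then ContinuousOn L (slab T) else ContDiffOn ℝ 1 L (slab T)) ∧
  (∀ j, ContDiffOn ℝ 1 (u j) (slab T)) ∧
  C0H (if c^2 = 0 then N - 1 else N) T L ∧
  C0H N T (fun p => u0 Ω u p - 1) ∧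
  (∀ j, C0H N T (u j)) ∧
  SolutionOn Ω c T L u

/-- the lower-order velocity norm U_M(t) = e^Ω 𝔇(Ω) (Σ_j ‖u^j‖²_{H^M})^{1/2} -/
def UNorm (Ω 𝔇 : ℝ → ℝ) (M : ℕ) (u : Fin 3 → Spacetime → ℝ) (t : ℝ) : ℝ :=
  Real.exp (Ω t) * 𝔇 (Ω t) * Real.sqrt (∑ j, HNormSq M (tslice (u j) t))

/-- S_{N;velocity} -/
def SvelNorm (Ω : ℝ → ℝ) (N : ℕ) (u : Fin 3 → Spacetime → ℝ) (t : ℝ) : ℝ :=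
  Real.exp (2 * Ω t) * ∑ j, HNorm N (tslice (u j) t)

/-- the solution norm S_N(t), defined casewise in c² -/
def SolNormSp (Ω 𝔇 : ℝ → ℝ) (c : ℝ) (N : ℕ) (Lt : Space → ℝ) (ut : Fin 3 → Space → ℝ)
    (t : ℝ) : ℝ :=
  if c^2 = 0 then HNorm (N-1) Lt + Real.exp (2 * Ω t) * ∑ j, HNorm N (ut j)
  else if c^2 < 1/3 then
    HNorm N Lt + Real.exp (Ω t) * ∑ j, HNorm N (ut j)
      + Real.exp (Ω t) * 𝔇 (Ω t) * Real.sqrt (∑ j, HNormSq (N-1) (ut j))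
  else HNorm N Lt + Real.exp (Ω t) * ∑ j, HNorm N (ut j)

/-- the solution norm S_N(t) of a spacetime solution -/
def SolNorm (Ω 𝔇 : ℝ → ℝ) (c : ℝ) (N : ℕ) (L : Spacetime → ℝ) (u : Fin 3 → Spacetime → ℝ)
    (t : ℝ) : ℝ :=
  SolNormSp Ω 𝔇 c N (tslice L t) (fun j => tslice (u j) t) t

/-- u̇⁰ := (1/u⁰) u_a u̇^a -/
def dotu0 (Ω : ℝ → ℝ) (u : Fin 3 → Spacetime → ℝ) (du : Fin 3 → Spacetime → ℝ)
    (p : Spacetime) : ℝ :=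
  (∑ a, Real.exp (2 * Ω p.1) * u a p * du a p) / u0 Ω u p

/-- the time component J̇⁰ of the energy current, evaluated on a variation (dL, du) -/
def Jdot0 (Ω : ℝ → ℝ) (c : ℝ) (u : Fin 3 → Spacetime → ℝ) (dL : Spacetime → ℝ)
    (du : Fin 3 → Spacetime → ℝ) (p : Spacetime) : ℝ :=
  (c^2 * u0 Ω u p / (1 + c^2)) * (dL p)^2 + 2 * c^2 * dotu0 Ω u du p * dL p
    + (1 + c^2) * u0 Ω u p *
        (-(dotu0 Ω u du p)^2 + Real.exp (2 * Ω p.1) * ∑ a, (du a p)^2)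

/-- E_N²(t) -/
def ENsq (Ω : ℝ → ℝ) (c : ℝ) (N : ℕ) (L : Spacetime → ℝ) (u : Fin 3 → Spacetime → ℝ)
    (t : ℝ) : ℝ :=
  ∑ α ∈ midxLe N, ∫ x : Space, Jdot0 Ω c u (mpdST α L) (fun j => mpdST α (u j)) (t, x)

/-- J̇⁰_{velocity} (case c² = 0) -/
def Jdot0vel (Ω : ℝ → ℝ) (u : Fin 3 → Spacetime → ℝ) (du : Fin 3 → Spacetime → ℝ)
    (p : Spacetime) : ℝ :=
  Real.exp (2 * Ω p.1) * u0 Ω u p *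
    (-(dotu0 Ω u du p)^2 + Real.exp (2 * Ω p.1) * ∑ a, (du a p)^2)

/-- E²_{N;velocity}(t) (case c² = 0) -/
def ENvelSq (Ω : ℝ → ℝ) (N : ℕ) (u : Fin 3 → Spacetime → ℝ) (t : ℝ) : ℝ :=
  ∑ α ∈ midxLe N, ∫ x : Space, Jdot0vel Ω u (fun j => mpdST α (u j)) (t, x)

/-- E²_{M;density}(t) (case c² = 0) -/
def ENdenSq (Ω : ℝ → ℝ) (M : ℕ) (L : Spacetime → ℝ) (u : Fin 3 → Spacetime → ℝ)
    (t : ℝ) : ℝ :=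
  ∑ α ∈ midxLe M, ∫ x : Space, u0 Ω u (t, x) * (mpdST α L (t, x))^2

/-- Hypothesis A1 on the scale factor -/
def HypA1 (Ω : ℝ → ℝ) : Prop :=
  ContDiff ℝ 1 Ω ∧ Ω 1 = 0 ∧ (∀ t ≥ (1:ℝ), 1 ≤ Real.exp (Ω t)) ∧
  MonotoneOn (fun t => Real.exp (Ω t)) (Set.Ici 1) ∧
  Tendsto (fun t => Real.exp (Ω t)) atTop atTop

/-- Hypotheses A2–A3 on the scale factor (casewise in c²) -/
def HypA23 (Ω 𝔇 : ℝ → ℝ) (c : ℝ) : Prop :=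
  (c^2 = 0 → IntegrableOn (fun s => Real.exp (-(2 * Ω s))) (Set.Ici 1)) ∧
  (0 < c^2 ∧ c^2 < 1/3 →
    ContDiff ℝ 1 𝔇 ∧ (∀ x, 0 < 𝔇 x) ∧ MonotoneOn 𝔇 (Set.Ici 1) ∧ Tendsto 𝔇 atTop atTop ∧
    (∃ X : ℝ, ∀ x ≥ X, deriv 𝔇 x / 𝔇 x ≤ 1 - 3 * c^2) ∧
    IntegrableOn (fun x => (𝔇 x)⁻¹) (Set.Ici 1) ∧
    IntegrableOn (fun s => Real.exp (-(Ω s)) * 𝔇 (Ω s)) (Set.Ici 1)) ∧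
  (c^2 = 1/3 → IntegrableOn (fun s => Real.exp (-(Ω s))) (Set.Ici 1))

set_option maxHeartbeats 1000000 in
/-- Proposition 2.1: equivalence of the coordinate form of the
relativistic Euler equations with the modified system (P), (U_j), and the equation
satisfied by u⁰. -/
theorem alternative_formulation_of_relativistic_Euler
    (Ω : ℝ → ℝ) (hΩ : ContDiff ℝ 1 Ω) (hΩ1 : Ω 1 = 0)
    (c : ℝ) (hc0 : 0 ≤ c^2) (hc1 : c^2 ≤ 1/3)
    (ρbar : ℝ) (hρbar : 0 < ρbar)
    (s : Set Spacetime) (hs : IsOpen s) (hs1 : ∀ p ∈ s, 1 ≤ p.1)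
    (ρ : Spacetime → ℝ) (u : Fin 3 → Spacetime → ℝ)
    (hρpos : ∀ p ∈ s, 0 < ρ p) (hρ : ContDiffOn ℝ 1 ρ s)
    (hu : ∀ j, ContDiffOn ℝ 1 (u j) s)
    (L : Spacetime → ℝ)
    (hL : L = fun p => Real.log (Real.exp (3 * (1 + c^2) * Ω p.1) * ρ p / ρbar)) :
    ∀ p ∈ s,
      ((((∑ μ, Uup Ω u μ p * pd μ (fun q => Real.log (ρ q)) p)
            + (1 + c^2) * (∑ μ, pd μ (Uup Ω u μ) p)
            + 3 * (1 + c^2) * omg Ω p.1 * u0 Ω u p = 0)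
          ∧ ∀ j : Fin 3,
            (∑ μ, Uup Ω u μ p * pd μ (u j) p) + 2 * omg Ω p.1 * u0 Ω u p * u j p
              + (c^2 / (1 + c^2)) *
                  (∑ μ, PiUp Ω u p j.succ μ * pd μ (fun q => Real.log (ρ q)) p) = 0)
        ↔ (eqnP Ω c L u p ∧ ∀ j, eqnU Ω c L u j p))
      ∧ ((eqnP Ω c L u p ∧ ∀ j, eqnU Ω c L u j p) →
          (∑ μ, Uup Ω u μ p * pd μ (fun q => u0 Ω u q) p)
              + (c^2 / (1 + c^2)) * (∑ μ, PiUp Ω u p 0 μ * pd μ L p)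
            = omg Ω p.1 * (3 * c^2 - 1) * (Real.exp (2 * Ω p.1) * ∑ a, (u a p)^2)) := by
  
  intro p hp
  have hps : s ∈ nhds p := hs.mem_nhds hp
  have hρp : 0 < ρ p := hρpos p hp
  have hρd : DifferentiableAt ℝ ρ p := (hρ.differentiableOn one_ne_zero).differentiableAt hps
  have hud : ∀ a : Fin 3, DifferentiableAt ℝ (u a) p :=
    fun a => ((hu a).differentiableOn one_ne_zero).differentiableAt hps
  have hΩd : DifferentiableAt ℝ Ω p.1 := (hΩ.differentiable one_ne_zero) p.1
  have h1c : (0:ℝ) < 1 + c^2 := by nlinarith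
  -- basic positivity
  have hSnn : (0:ℝ) ≤ ∑ a, (u a p)^2 := Finset.sum_nonneg fun a _ => sq_nonneg _
  have hEpos : 0 < Real.exp (2*Ω p.1) := Real.exp_pos _
  have hFpos : 0 < 1 + Real.exp (2*Ω p.1) * ∑ a, (u a p)^2 := by positivity
  have hU0pos : 0 < u0 Ω u p := Real.sqrt_pos.mpr hFpos
  have hU0sq : (u0 Ω u p)^2 = 1 + Real.exp (2*Ω p.1) * ∑ a, (u a p)^2 := Real.sq_sqrt hFpos.le
  -- derivative of t ↦ Ω t as a spacetime map
  have hΩfd : HasFDerivAt (fun q : Spacetime => Ω q.1)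
      ((deriv Ω p.1) • ContinuousLinearMap.fst ℝ ℝ Space) p :=
    hΩd.hasDerivAt.comp_hasFDerivAt p hasFDerivAt_fst
  -- derivative of log ρ
  have hlogd : HasFDerivAt (fun q => Real.log (ρ q)) ((ρ p)⁻¹ • fderiv ℝ ρ p) p :=
    hρd.hasFDerivAt.log hρp.ne'
  -- L agrees near p with an explicit function
  have hLev : L =ᶠ[nhds p] fun q => 3*(1+c^2)*Ω q.1 + (Real.log (ρ q) - Real.log ρbar) := by
    filter_upwards [hps] with q hq
    have h1 : Real.exp (3*(1+c^2)*Ω q.1) ≠ 0 := (Real.exp_pos _).ne'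
    have h2 : ρ q ≠ 0 := (hρpos q hq).ne'
    simp only [hL]
    rw [Real.log_div (mul_ne_zero h1 h2) hρbar.ne', Real.log_mul h1 h2, Real.log_exp]
    ring
  have hLd : HasFDerivAt L ((3*(1+c^2)) • ((deriv Ω p.1) • ContinuousLinearMap.fst ℝ ℝ Space)
      + (ρ p)⁻¹ • fderiv ℝ ρ p) p :=
    HasFDerivAt.congr_of_eventuallyEq
      ((hΩfd.const_mul (3*(1+c^2))).add (hlogd.sub_const (Real.log ρbar))) hLev
  have hLpd : ∀ μ, pd μ L p
      = pd μ (fun q => Real.log (ρ q)) p + 3*(1+c^2)*(deriv Ω p.1)*(dir4 μ).1 := by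
    intro μ
    simp only [pd, hLd.fderiv, hlogd.fderiv, ContinuousLinearMap.add_apply,
      ContinuousLinearMap.smul_apply, ContinuousLinearMap.coe_fst', smul_eq_mul]
    ring
  -- derivative of u0
  have hsq : ∀ a : Fin 3, HasFDerivAt (fun q => (u a q)^2)
      ((u a p) • fderiv ℝ (u a) p + (u a p) • fderiv ℝ (u a) p) p := by
    intro a
    simpa only [pow_two] using ((hud a).hasFDerivAt).fun_mul ((hud a).hasFDerivAt)
  have hsumd : HasFDerivAt (fun q : Spacetime => ∑ a, (u a q)^2)
      (∑ a, ((u a p) • fderiv ℝ (u a) p + (u a p) • fderiv ℝ (u a) p)) p :=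
    HasFDerivAt.fun_sum fun a _ => hsq a
  have hexpd : HasFDerivAt (fun q : Spacetime => Real.exp (2*Ω q.1))
      (Real.exp (2*Ω p.1) • ((2:ℝ) • ((deriv Ω p.1) • ContinuousLinearMap.fst ℝ ℝ Space))) p :=
    (hΩfd.const_mul 2).exp
  have hu0d : HasFDerivAt (fun q => u0 Ω u q)
      ((1 / (2 * u0 Ω u p)) •
        (Real.exp (2*Ω p.1) • (∑ a, ((u a p) • fderiv ℝ (u a) p + (u a p) • fderiv ℝ (u a) p))
          + (∑ a, (u a p)^2) •
            (Real.exp (2*Ω p.1) • ((2:ℝ) • ((deriv Ω p.1) • ContinuousLinearMap.fst ℝ ℝ Space))))) p :=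
    ((hexpd.mul hsumd).const_add 1).sqrt hFpos.ne'
  have hu0pd : ∀ μ, pd μ (fun q => u0 Ω u q) p
      = ((deriv Ω p.1) * (dir4 μ).1 * Real.exp (2*Ω p.1) * (∑ a, (u a p)^2)
          + Real.exp (2*Ω p.1) * ∑ a, u a p * pd μ (u a) p) / u0 Ω u p := by
    intro μ
    simp only [pd, hu0d.fderiv, ContinuousLinearMap.add_apply, ContinuousLinearMap.smul_apply,
      ContinuousLinearMap.coe_sum', Finset.sum_apply, ContinuousLinearMap.coe_fst', smul_eq_mul]
    rw [Fin.sum_univ_three, Fin.sum_univ_three, Fin.sum_univ_three]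
    field_simp
    ring
  -- index bookkeeping
  have ept : ∀ g : Spacetime → ℝ, pdt g p = pd 0 g p := fun g => rfl
  have eps0 : ∀ g : Spacetime → ℝ, pds 0 g p = pd 1 g p := fun g => rfl
  have eps1 : ∀ g : Spacetime → ℝ, pds 1 g p = pd 2 g p := fun g => rfl
  have eps2 : ∀ g : Spacetime → ℝ, pds 2 g p = pd 3 g p := fun g => rfl
  have eUf0 : Uup Ω u 0 = (fun q => u0 Ω u q) := rfl
  have eUf1 : Uup Ω u 1 = u 0 := rfl
  have eUf2 : Uup Ω u 2 = u 1 := rfl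
  have eUf3 : Uup Ω u 3 = u 2 := rfl
  have eU0 : ∀ q, Uup Ω u 0 q = u0 Ω u q := fun _ => rfl
  have eU1 : ∀ q, Uup Ω u 1 q = u 0 q := fun _ => rfl
  have eU2 : ∀ q, Uup Ω u 2 q = u 1 q := fun _ => rfl
  have eU3 : ∀ q, Uup Ω u 3 q = u 2 q := fun _ => rfl
  have d0 : ((dir4 0).1 : ℝ) = 1 := rfl
  have d1 : ((dir4 1).1 : ℝ) = 0 := rfl
  have d2 : ((dir4 2).1 : ℝ) = 0 := rfl
  have d3 : ((dir4 3).1 : ℝ) = 0 := rfl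
  -- Part 1: equivalence with eqnP
  have hPiff : ((∑ μ, Uup Ω u μ p * pd μ (fun q => Real.log (ρ q)) p)
        + (1 + c^2) * (∑ μ, pd μ (Uup Ω u μ) p)
        + 3 * (1 + c^2) * omg Ω p.1 * u0 Ω u p = 0) ↔ eqnP Ω c L u p := by
    have key : (∑ μ, Uup Ω u μ p * pd μ (fun q => Real.log (ρ q)) p)
        + (1 + c^2) * (∑ μ, pd μ (Uup Ω u μ) p)
        + 3 * (1 + c^2) * omg Ω p.1 * u0 Ω u p
      = ((∑ μ, Uup Ω u μ p * pd μ L p)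
          + (1 + c^2) * (∑ a, (Real.exp (2 * Ω p.1) * u a p / u0 Ω u p) * pdt (u a) p)
          + (1 + c^2) * (∑ a, pds a (u a) p))
        - (-(omg Ω p.1 * (1 + c^2) * (Real.exp (2 * Ω p.1) * ∑ a, (u a p)^2) / u0 Ω u p)) := by
      simp only [Fin.sum_univ_four, Fin.sum_univ_three, omg, eUf0, eUf1, eUf2, eUf3,
        eU0, eU1, eU2, eU3, ept, eps0, eps1, eps2]
      rw [hLpd 0, hLpd 1, hLpd 2, hLpd 3, hu0pd 0]
      rw [d0, d1, d2, d3]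
      simp only [Fin.sum_univ_three]
      field_simp
      ring
    unfold eqnP
    constructor <;> intro h <;> linarith [key]
  -- Π^{j0} and the L-sum for U_j
  have hPisum : ∀ j : Fin 3, (∑ μ, PiUp Ω u p j.succ μ * pd μ L p)
      = (∑ μ, PiUp Ω u p j.succ μ * pd μ (fun q => Real.log (ρ q)) p)
        + 3*(1+c^2)*(deriv Ω p.1) * (u j p * u0 Ω u p) := by
    intro j
    have hg : PiUp Ω u p j.succ 0 = u j p * u0 Ω u p := by
      simp [PiUp, ginv, Fin.succ_ne_zero, Uup]
    rw [Fin.sum_univ_four, Fin.sum_univ_four, hLpd 0, hLpd 1, hLpd 2, hLpd 3, hg, d0, d1, d2, d3]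
    ring
  have hUiff : ∀ j : Fin 3, ((∑ μ, Uup Ω u μ p * pd μ (u j) p)
        + 2 * omg Ω p.1 * u0 Ω u p * u j p
        + (c^2 / (1 + c^2)) *
            (∑ μ, PiUp Ω u p j.succ μ * pd μ (fun q => Real.log (ρ q)) p) = 0)
      ↔ eqnU Ω c L u j p := by
    intro j
    unfold eqnU omg
    rw [hPisum j]
    have hkey : (c^2/(1+c^2)) * ((∑ μ, PiUp Ω u p j.succ μ * pd μ (fun q => Real.log (ρ q)) p)
        + 3*(1+c^2)*(deriv Ω p.1)*(u j p * u0 Ω u p))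
      = (c^2/(1+c^2)) * (∑ μ, PiUp Ω u p j.succ μ * pd μ (fun q => Real.log (ρ q)) p)
        + 3*c^2*(deriv Ω p.1)*(u j p * u0 Ω u p) := by
      field_simp
    rw [hkey]
    constructor <;> intro h <;> linarith
  refine ⟨and_congr hPiff (forall_congr' hUiff), ?_⟩
  -- Part 2
  rintro ⟨-, hU⟩
  have hEinv : Real.exp (2*Ω p.1) * Real.exp (-(2*Ω p.1)) = 1 := by
    rw [← Real.exp_add]; simp
  have hU0sq3 : u0 Ω u p ^ 2
      = 1 + Real.exp (2*Ω p.1) * (u 0 p^2 + u 1 p^2 + u 2 p^2) := by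
    rw [hU0sq, Fin.sum_univ_three]
  have g00 : ginv Ω p 0 0 = -1 := by simp [ginv]
  have g01 : ginv Ω p 0 1 = 0 := by simp [ginv]
  have g02 : ginv Ω p 0 2 = 0 := by simp [ginv]
  have g03 : ginv Ω p 0 3 = 0 := by simp [ginv]
  have g10 : ginv Ω p 1 0 = 0 := by simp [ginv]
  have g20 : ginv Ω p 2 0 = 0 := by simp [ginv]
  have g30 : ginv Ω p 3 0 = 0 := by simp [ginv]
  have g11 : ginv Ω p 1 1 = Real.exp (-(2*Ω p.1)) := by simp [ginv]
  have g22 : ginv Ω p 2 2 = Real.exp (-(2*Ω p.1)) := by simp [ginv]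
  have g33 : ginv Ω p 3 3 = Real.exp (-(2*Ω p.1)) := by simp [ginv]
  have g12 : ginv Ω p 1 2 = 0 := by simp [ginv]
  have g13 : ginv Ω p 1 3 = 0 := by simp [ginv]
  have g21 : ginv Ω p 2 1 = 0 := by simp [ginv]
  have g23 : ginv Ω p 2 3 = 0 := by simp [ginv]
  have g31 : ginv Ω p 3 1 = 0 := by simp [ginv]
  have g32 : ginv Ω p 3 2 = 0 := by simp [ginv]
  have hPi0 : u0 Ω u p * PiUp Ω u p 0 0
      = Real.exp (2*Ω p.1) * (u 0 p * PiUp Ω u p 1 0 + u 1 p * PiUp Ω u p 2 0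
          + u 2 p * PiUp Ω u p 3 0) := by
    simp only [PiUp, eU0, eU1, eU2, eU3, g00, g10, g20, g30]
    linear_combination (u0 Ω u p) * hU0sq3
  have hPi1 : u0 Ω u p * PiUp Ω u p 0 1
      = Real.exp (2*Ω p.1) * (u 0 p * PiUp Ω u p 1 1 + u 1 p * PiUp Ω u p 2 1
          + u 2 p * PiUp Ω u p 3 1) := by
    simp only [PiUp, eU0, eU1, eU2, eU3, g01, g11, g21, g31]
    linear_combination (u 0 p) * hU0sq3 - (u 0 p) * hEinv
  have hPi2 : u0 Ω u p * PiUp Ω u p 0 2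
      = Real.exp (2*Ω p.1) * (u 0 p * PiUp Ω u p 1 2 + u 1 p * PiUp Ω u p 2 2
          + u 2 p * PiUp Ω u p 3 2) := by
    simp only [PiUp, eU0, eU1, eU2, eU3, g02, g12, g22, g32]
    linear_combination (u 1 p) * hU0sq3 - (u 1 p) * hEinv
  have hPi3 : u0 Ω u p * PiUp Ω u p 0 3
      = Real.exp (2*Ω p.1) * (u 0 p * PiUp Ω u p 1 3 + u 1 p * PiUp Ω u p 2 3
          + u 2 p * PiUp Ω u p 3 3) := by
    simp only [PiUp, eU0, eU1, eU2, eU3, g03, g13, g23, g33]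
    linear_combination (u 2 p) * hU0sq3 - (u 2 p) * hEinv
  have hQ : u0 Ω u p * (∑ μ, PiUp Ω u p 0 μ * pd μ L p)
      = Real.exp (2*Ω p.1) * ∑ a, u a p * (∑ μ, PiUp Ω u p a.succ μ * pd μ L p) := by
    simp only [Fin.sum_univ_four, Fin.sum_univ_three, show (Fin.succ 0 : Fin 4) = 1 from rfl,
      show (Fin.succ 1 : Fin 4) = 2 from rfl, show (Fin.succ 2 : Fin 4) = 3 from rfl]
    linear_combination (pd 0 L p) * hPi0 + (pd 1 L p) * hPi1 + (pd 2 L p) * hPi2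
      + (pd 3 L p) * hPi3
  have hQ' : (∑ μ, PiUp Ω u p 0 μ * pd μ L p)
      = Real.exp (2*Ω p.1) * (∑ a, u a p * (∑ μ, PiUp Ω u p a.succ μ * pd μ L p)) / u0 Ω u p := by
    rw [eq_div_iff hU0pos.ne']
    linarith [hQ]
  have hG : ∀ a : Fin 3, (∑ μ, Uup Ω u μ p * pd μ (u a) p)
      = omg Ω p.1 * (3*c^2 - 2) * u0 Ω u p * u a p
        - (c^2/(1+c^2)) * (∑ μ, PiUp Ω u p a.succ μ * pd μ L p) := by
    intro a
    have h := hU a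
    unfold eqnU at h
    linarith
  have hS0 : ∑ μ, Uup Ω u μ p * pd μ (fun q => u0 Ω u q) p
      = omg Ω p.1 * Real.exp (2*Ω p.1) * (∑ a, (u a p)^2)
        + (Real.exp (2*Ω p.1) / u0 Ω u p)
            * ∑ a, u a p * (∑ μ, Uup Ω u μ p * pd μ (u a) p) := by
    rw [Fin.sum_univ_four, hu0pd 0, hu0pd 1, hu0pd 2, hu0pd 3, d0, d1, d2, d3]
    simp only [Fin.sum_univ_four, Fin.sum_univ_three, omg, eU0, eU1, eU2, eU3]
    field_simp
    ring
  rw [hS0, hQ']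
  simp only [Fin.sum_univ_three]
  rw [hG 0, hG 1, hG 2]
  field_simp
  ring
end
end

section
/- Isolated time derivatives (Corollary 2.2): Let (L,u¹,u²,u³) be a C¹ solution of (P),(U_j) with u⁰ as in the context, and set q := e^{2Ω}δ_{ab}u^au^b/(u⁰)² (note 0 ≤ q < 1 and 1−c²q > 0). Then ∂_tL = Δ', ∂_tu⁰ = Δ'⁰, and ∂_tu^j = ω(3c²−2)u^j + Δ'^j for j=1,2,3, where: Δ' := ω(1+c²)(1−3c²)q/(1−c²q) + (1−c²q)⁻¹[(c²−1)(u^a/u⁰)∂_aL − (1+c²)(∂_au^a)/u⁰ + (1+c²)(u⁰)⁻³e^{2Ω}δ_{ab}u^au^k∂_ku^b]; Δ'⁰ := ω(3c²−1)(e^{2Ω}δ_{ab}u^au^b/u⁰)/(1−c²q) − (c²/(1+c²))((1−q)/(1−c²q))u^a∂_aL + (c²q/(1−c²q))∂_au^a − (1−c²q)⁻¹(e^{2Ω}δ_{ab}u^au^k∂_ku^b)/(u⁰)²; Δ'^j := ωc²(3c²−1)u^j q/(1−c²q) + c²u^j(1−c²q)⁻¹[(∂_au^a)/u⁰ − e^{2Ω}δ_{ab}u^au^k∂_ku^b/(u⁰)³]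 − (c⁴/(1+c²))u^j((1−q)/(1−c²q))(u^a/u⁰)∂_aL − (u^a/u⁰)∂_au^j − (c²/(1+c²))e^{−2Ω}δ^{aj}(∂_aL)/u⁰. -/
noncomputable section
open MeasureTheory Real Filter Metric

lemma Uup_zero (Ω : ℝ → ℝ) (u : Fin 3 → Spacetime → ℝ) : Uup Ω u 0 = u0 Ω u := rfl
lemma Uup_succ (Ω : ℝ → ℝ) (u : Fin 3 → Spacetime → ℝ) (i : Fin 3) : Uup Ω u i.succ = u i := rfl
lemma pd_zero : pd 0 = pdt := rfl
lemma pd_succ (i : Fin 3) : pd i.succ = pds i := rfl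
lemma pdt_u0 (Ω : ℝ → ℝ) (hΩ : ContDiff ℝ 1 Ω) (u : Fin 3 → Spacetime → ℝ) (p : Spacetime)
    (hud : ∀ j, DifferentiableAt ℝ (u j) p) :
    pdt (fun q => u0 Ω u q) p
      = (deriv Ω p.1 * Real.exp (2 * Ω p.1) * (∑ a, (u a p)^2)
          + Real.exp (2 * Ω p.1) * ∑ a, u a p * pdt (u a) p) / u0 Ω u p := by
  have hΩd : HasDerivAt Ω (deriv Ω p.1) p.1 :=
    ((hΩ.differentiable one_ne_zero) p.1).hasDerivAt
  have hfst : HasFDerivAt (fun q : Spacetime => q.1) (ContinuousLinearMap.fst ℝ ℝ Space) p :=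
    hasFDerivAt_fst
  have h1 : HasFDerivAt (fun q : Spacetime => Ω q.1)
      ((deriv Ω p.1) • ContinuousLinearMap.fst ℝ ℝ Space) p :=
    hΩd.comp_hasFDerivAt p hfst
  have h2' : HasDerivAt (fun y : ℝ => Real.exp (2 * y)) (Real.exp (2 * Ω p.1) * 2) (Ω p.1) := by
    have := (Real.hasDerivAt_exp (2 * Ω p.1)).comp (Ω p.1)
      ((hasDerivAt_id (Ω p.1)).const_mul 2)
    simpa [Function.comp_def] using this
  have h2 : HasFDerivAt (fun q : Spacetime => Real.exp (2 * Ω q.1))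
      ((Real.exp (2 * Ω p.1) * 2) • ((deriv Ω p.1) • ContinuousLinearMap.fst ℝ ℝ Space)) p :=
    by have := h2'.comp_hasFDerivAt p h1; exact this
  have h3 : HasFDerivAt (fun q : Spacetime => ∑ a, (u a q)^2)
      (∑ a, (2 * u a p) • (fderiv ℝ (u a) p)) p := by
    refine HasFDerivAt.fun_sum (fun a _ => ?_)
    have := ((hud a).hasFDerivAt).fun_mul ((hud a).hasFDerivAt)
    simpa [pow_two, two_mul, add_smul] using this
  have h4 : HasFDerivAt (fun q : Spacetime => 1 + Real.exp (2 * Ω q.1) * ∑ a, (u a q)^2)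
      ((Real.exp (2 * Ω p.1)) • (∑ a, (2 * u a p) • (fderiv ℝ (u a) p))
        + (∑ a, (u a p)^2) • ((Real.exp (2 * Ω p.1) * 2) • ((deriv Ω p.1) • ContinuousLinearMap.fst ℝ ℝ Space))) p := by
    have := (h2.fun_mul h3).const_add 1
    convert this using 1
  have hpos : (0:ℝ) < 1 + Real.exp (2 * Ω p.1) * ∑ a, (u a p)^2 := by positivity
  have h5 : HasDerivAt Real.sqrt (1 / (2 * Real.sqrt (1 + Real.exp (2 * Ω p.1) * ∑ a, (u a p)^2)))
      (1 + Real.exp (2 * Ω p.1) * ∑ a, (u a p)^2) := Real.hasDerivAt_sqrt (ne_of_gt hpos)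
  have h6 := h5.comp_hasFDerivAt p h4
  have h8 := h6.fderiv
  rw [show (Real.sqrt ∘ fun q : Spacetime => 1 + Real.exp (2 * Ω q.1) * ∑ a, (u a q)^2)
      = (fun q => u0 Ω u q) from rfl] at h8
  rw [pdt, h8]
  have hsq : Real.sqrt (1 + Real.exp (2 * Ω p.1) * ∑ a, (u a p)^2) = u0 Ω u p := rfl
  simp only [ContinuousLinearMap.smul_apply, ContinuousLinearMap.add_apply,
    ContinuousLinearMap.sum_apply, ContinuousLinearMap.coe_fst', smul_eq_mul, hsq]
  have hU0 : 0 < u0 Ω u p := Real.sqrt_pos.mpr hpos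
  have hpdt : ∀ a, fderiv ℝ (u a) p ((1:ℝ), (0:Space)) = pdt (u a) p := fun a => rfl
  simp only [hpdt]
  rw [Finset.mul_sum, Finset.mul_sum]
  have hU0' : Real.sqrt (1 + Real.exp (2 * Ω p.1) * ∑ a, (u a p)^2) ≠ 0 := by
    rw [hsq] at *; exact ne_of_gt hU0
  rw [eq_div_iff (by rw [← hsq]; exact hU0')]
  rw [← hsq]
  field_simp
  have e1 : ∑ i : Fin 3, Real.exp (2 * Ω p.1) * (2 * u i p * pdt (u i) p)
      = 2 * (Real.exp (2 * Ω p.1) * ∑ a : Fin 3, u a p * pdt (u a) p) := by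
    rw [Finset.mul_sum, Finset.mul_sum]; exact Finset.sum_congr rfl fun i _ => by ring
  have e2 : ∑ i : Fin 3, deriv Ω p.1 * Real.exp (2 * Ω p.1) * u i p ^ 2
      = deriv Ω p.1 * Real.exp (2 * Ω p.1) * ∑ a : Fin 3, u a p ^ 2 := by
    rw [Finset.mul_sum]
  simp only [Finset.mul_sum, Fin.sum_univ_three]; ring

set_option maxHeartbeats 1600000

/-- Corollary 2.2: isolated time derivatives for solutions of
the modified relativistic Euler system. -/
theorem isolated_time_derivatives
    (Ω : ℝ → ℝ) (hΩ : ContDiff ℝ 1 Ω) (hΩ1 : Ω 1 = 0)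
    (c : ℝ) (hc0 : 0 ≤ c^2) (hc1 : c^2 ≤ 1/3)
    (s : Set Spacetime) (hs : IsOpen s) (hs1 : ∀ p ∈ s, 1 ≤ p.1)
    (L : Spacetime → ℝ) (u : Fin 3 → Spacetime → ℝ)
    (hL : ContDiffOn ℝ 1 L s) (hu : ∀ j, ContDiffOn ℝ 1 (u j) s)
    (hsol : ∀ p ∈ s, eqnP Ω c L u p ∧ ∀ j, eqnU Ω c L u j p) :
    ∀ p ∈ s,
      -- the quantity q := e^{2Ω} δ_{ab} u^a u^b / (u⁰)²
      (fun q : ℝ =>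
        (0 ≤ q ∧ q < 1 ∧ 0 < 1 - c^2 * q)
        ∧ pdt L p
            = omg Ω p.1 * (1 + c^2) * (1 - 3 * c^2) * q / (1 - c^2 * q)
              + (1 - c^2 * q)⁻¹ *
                ((c^2 - 1) * (∑ a, (u a p / u0 Ω u p) * pds a L p)
                  - (1 + c^2) * (∑ a, pds a (u a) p) / u0 Ω u p
                  + (1 + c^2) * (u0 Ω u p)⁻¹^3 * Real.exp (2 * Ω p.1) *
                      (∑ a, ∑ k, u a p * u k p * pds k (u a) p))
        ∧ pdt (fun q' => u0 Ω u q') p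
            = omg Ω p.1 * (3 * c^2 - 1) *
                ((Real.exp (2 * Ω p.1) * ∑ a, (u a p)^2) / u0 Ω u p) / (1 - c^2 * q)
              - (c^2 / (1 + c^2)) * ((1 - q) / (1 - c^2 * q)) * (∑ a, u a p * pds a L p)
              + (c^2 * q / (1 - c^2 * q)) * (∑ a, pds a (u a) p)
              - (1 - c^2 * q)⁻¹ *
                  ((Real.exp (2 * Ω p.1) * ∑ a, ∑ k, u a p * u k p * pds k (u a) p)
                    / (u0 Ω u p)^2)
        ∧ ∀ j : Fin 3, pdt (u j) p
            = omg Ω p.1 * (3 * c^2 - 2) * u j p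
              + (omg Ω p.1 * c^2 * (3 * c^2 - 1) * u j p * q / (1 - c^2 * q)
                  + c^2 * u j p * (1 - c^2 * q)⁻¹ *
                      ((∑ a, pds a (u a) p) / u0 Ω u p
                        - Real.exp (2 * Ω p.1) *
                            (∑ a, ∑ k, u a p * u k p * pds k (u a) p) / (u0 Ω u p)^3)
                  - (c^4 / (1 + c^2)) * u j p * ((1 - q) / (1 - c^2 * q)) *
                      (∑ a, (u a p / u0 Ω u p) * pds a L p)
                  - (∑ a, (u a p / u0 Ω u p) * pds a (u j) p)
                  - (c^2 / (1 + c^2)) * Real.exp (-(2 * Ω p.1)) * pds j L p / u0 Ω u p))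
      ((Real.exp (2 * Ω p.1) * ∑ a, (u a p)^2) / (u0 Ω u p)^2) := by
  intro p hp
  obtain ⟨hPe, hUe⟩ := hsol p hp
  have hmem : s ∈ nhds p := hs.mem_nhds hp
  have hud : ∀ j, DifferentiableAt ℝ (u j) p :=
    fun j => ((hu j).differentiableOn one_ne_zero).differentiableAt hmem
  have hc2 : (0:ℝ) < 1 + c^2 := by linarith
  have hE : (0:ℝ) < Real.exp (2 * Ω p.1) := Real.exp_pos _
  have hU0 : (0:ℝ) < u0 Ω u p := Real.sqrt_pos.mpr (by positivity)
  -- extract scalar equations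
  simp only [eqnP, eqnU, Fin.sum_univ_succ, Fin.sum_univ_zero, add_zero, Uup_zero, Uup_succ,
    pd_zero, pd_succ, PiUp, ginv, Fin.succ_ne_zero, false_and, if_false, Fin.succ_inj,
    Fin.succ_zero_eq_one, Fin.succ_one_eq_two, and_self, ite_and] at hPe hUe
  rw [Real.exp_neg] at hUe
  field_simp at hPe
  have h0 := hUe 0
  have h1 := hUe 1
  have h2 := hUe 2
  simp only [Fin.reduceEq, if_true, if_false, reduceIte, add_zero] at h0 h1 h2
  field_simp at h0 h1 h2
  -- derivative of u0
  have hdu0 := pdt_u0 Ω hΩ u p hud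
  -- expand goal sums and beta-reduce
  simp only [Fin.sum_univ_three, Real.exp_neg]
  rw [Fin.sum_univ_three, Fin.sum_univ_three] at hdu0
  -- atoms
  set E := Real.exp (2 * Ω p.1) with hEd
  set W := omg Ω p.1 with hWd
  set U := u0 Ω u p with hUd
  set A := pdt L p with hAd
  set S := u 0 p ^ 2 + u 1 p ^ 2 + u 2 p ^ 2 with hSd
  set P1 := u 0 p * pds 0 L p + u 1 p * pds 1 L p + u 2 p * pds 2 L p with hP1d
  set Dv := pds 0 (u 0) p + pds 1 (u 1) p + pds 2 (u 2) p with hDvd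
  set T := u 0 p * u 0 p * pds 0 (u 0) p + u 0 p * u 1 p * pds 1 (u 0) p
      + u 0 p * u 2 p * pds 2 (u 0) p
      + (u 1 p * u 0 p * pds 0 (u 1) p + u 1 p * u 1 p * pds 1 (u 1) p
        + u 1 p * u 2 p * pds 2 (u 1) p)
      + (u 2 p * u 0 p * pds 0 (u 2) p + u 2 p * u 1 p * pds 1 (u 2) p
        + u 2 p * u 2 p * pds 2 (u 2) p) with hTd
  set YY := u 0 p * pdt (u 0) p + u 1 p * pdt (u 1) p + u 2 p * pdt (u 2) p with hYd
  -- basic relations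
  have hU2 : U^2 = 1 + E * S := by
    rw [hUd, hEd, hSd]
    simp only [u0]
    rw [Real.sq_sqrt (by positivity), Fin.sum_univ_three]
  have hdu0' : pdt (fun q => u0 Ω u q) p = (W * E * S + E * YY) / U := by
    rw [hdu0, hSd, hYd, hUd, hEd, hWd]
    simp only [omg]
  -- canonical cleared equations
  have hP3 : U^2 * A + U * P1 + (1+c^2) * E * YY + (1+c^2) * U * Dv
      = -(W * (1+c^2) * E * S) := by
    rw [hP1d, hSd, hDvd, hYd]
    linear_combination hPe
  have hU30 : (1+c^2)*E*U*pdt (u 0) p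
      + (1+c^2)*E*(u 0 p * pds 0 (u 0) p + u 1 p * pds 1 (u 0) p + u 2 p * pds 2 (u 0) p)
      + c^2*(E*u 0 p*U*A + E*u 0 p*P1 + pds 0 L p)
      = (1+c^2)*W*(3*c^2-2)*U*E*u 0 p := by
    rw [hP1d]; linear_combination h0
  have hU31 : (1+c^2)*E*U*pdt (u 1) p
      + (1+c^2)*E*(u 0 p * pds 0 (u 1) p + u 1 p * pds 1 (u 1) p + u 2 p * pds 2 (u 1) p)
      + c^2*(E*u 1 p*U*A + E*u 1 p*P1 + pds 1 L p)
      = (1+c^2)*W*(3*c^2-2)*U*E*u 1 p := by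
    rw [hP1d]; linear_combination h1
  have hU32 : (1+c^2)*E*U*pdt (u 2) p
      + (1+c^2)*E*(u 0 p * pds 0 (u 2) p + u 1 p * pds 1 (u 2) p + u 2 p * pds 2 (u 2) p)
      + c^2*(E*u 2 p*U*A + E*u 2 p*P1 + pds 2 L p)
      = (1+c^2)*W*(3*c^2-2)*U*E*u 2 p := by
    rw [hP1d]; linear_combination h2
  have hY3 : (1+c^2)*E*U*YY + (1+c^2)*E*T + c^2*(E*S*U*A + E*S*P1 + P1)
      = (1+c^2)*W*(3*c^2-2)*U*E*S := by
    rw [hSd, hP1d, hTd, hYd]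
    linear_combination u 0 p * h0 + u 1 p * h1 + u 2 p * h2
  clear_value E W U A S P1 Dv T YY
  clear h0 h1 h2 hPe hUe hdu0
  -- positivity facts
  have hS0 : 0 ≤ S := by rw [hSd]; positivity
  have hES : E * S = U^2 - 1 := by linarith [hU2]
  have hES0 : 0 ≤ E * S := mul_nonneg hE.le hS0
  have hU1 : 1 ≤ U^2 := by linarith [hU2]
  have hM0 : 0 < U^2 - c^2*(E*S) := by
    have h2' : c^2*(E*S) ≤ (1/3)*(E*S) := mul_le_mul_of_nonneg_right hc1 hES0
    linarith
  have hq1 : E * S / U^2 < 1 := by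
    rw [hES, div_lt_one (by positivity)]; linarith
  have hq0 : 0 ≤ E * S / U^2 := div_nonneg hES0 (by positivity)
  have hqpos : 0 < 1 - c^2 * (E * S / U^2) := by
    have hx0 : 0 ≤ (U^2-1)/U^2 := div_nonneg (by linarith) (by positivity)
    have hx1 : (U^2-1)/U^2 < 1 := by rw [div_lt_one (by positivity)]; linarith
    have : c^2*(E*S/U^2) < 1 := by
      rw [hES]
      calc c^2*((U^2-1)/U^2) ≤ 1*((U^2-1)/U^2) :=
            mul_le_mul_of_nonneg_right (by linarith) hx0
        _ < 1 := by linarith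
    linarith
  have h1q : (1 - c^2*(E*S/U^2)) ≠ 0 := ne_of_gt hqpos
  -- key solved forms
  have hAkey : (U^2 - c^2*(E*S))*U*A
      = W*(1+c^2)*(1-3*c^2)*E*S*U + (c^2-1)*U^2*P1 - (1+c^2)*U^2*Dv + (1+c^2)*E*T := by
    linear_combination U*hP3 - hY3 - c^2*P1*hU2
  have hAfrac : A = (W*(1+c^2)*(1-3*c^2)*E*S*U + (c^2-1)*U^2*P1 - (1+c^2)*U^2*Dv + (1+c^2)*E*T)
      / ((U^2 - c^2*(E*S))*U) := by
    rw [eq_div_iff (by positivity)]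
    linear_combination hAkey
  have hYfrac : YY = ((U^2-c^2*(E*S))*((1+c^2)*W*(3*c^2-2)*U*E*S - (1+c^2)*E*T)
        - c^2*(U^2-c^2*(E*S))*U^2*P1
        - c^2*E*S*(W*(1+c^2)*(1-3*c^2)*E*S*U + (c^2-1)*U^2*P1 - (1+c^2)*U^2*Dv + (1+c^2)*E*T))
      / ((1+c^2)*E*U*(U^2-c^2*(E*S))) := by
    rw [eq_div_iff (by positivity)]
    linear_combination (U^2-c^2*(E*S))*hY3 - c^2*E*S*hAkey + c^2*(U^2-c^2*(E*S))*P1*hU2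
  have hB0frac : pdt (u 0) p = ((U^2-c^2*(E*S))*((1+c^2)*W*(3*c^2-2)*U*E*u 0 p
        - (1+c^2)*E*(u 0 p * pds 0 (u 0) p + u 1 p * pds 1 (u 0) p + u 2 p * pds 2 (u 0) p)
        - c^2*(E*u 0 p*P1 + pds 0 L p))
        - c^2*E*u 0 p*(W*(1+c^2)*(1-3*c^2)*E*S*U + (c^2-1)*U^2*P1 - (1+c^2)*U^2*Dv + (1+c^2)*E*T))
      / ((1+c^2)*E*U*(U^2-c^2*(E*S))) := by
    rw [eq_div_iff (by positivity)]
    linear_combination (U^2-c^2*(E*S))*hU30 - c^2*E*u 0 p*hAkey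
  have hB1frac : pdt (u 1) p = ((U^2-c^2*(E*S))*((1+c^2)*W*(3*c^2-2)*U*E*u 1 p
        - (1+c^2)*E*(u 0 p * pds 0 (u 1) p + u 1 p * pds 1 (u 1) p + u 2 p * pds 2 (u 1) p)
        - c^2*(E*u 1 p*P1 + pds 1 L p))
        - c^2*E*u 1 p*(W*(1+c^2)*(1-3*c^2)*E*S*U + (c^2-1)*U^2*P1 - (1+c^2)*U^2*Dv + (1+c^2)*E*T))
      / ((1+c^2)*E*U*(U^2-c^2*(E*S))) := by
    rw [eq_div_iff (by positivity)]
    linear_combination (U^2-c^2*(E*S))*hU31 - c^2*E*u 1 p*hAkey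
  have hB2frac : pdt (u 2) p = ((U^2-c^2*(E*S))*((1+c^2)*W*(3*c^2-2)*U*E*u 2 p
        - (1+c^2)*E*(u 0 p * pds 0 (u 2) p + u 1 p * pds 1 (u 2) p + u 2 p * pds 2 (u 2) p)
        - c^2*(E*u 2 p*P1 + pds 2 L p))
        - c^2*E*u 2 p*(W*(1+c^2)*(1-3*c^2)*E*S*U + (c^2-1)*U^2*P1 - (1+c^2)*U^2*Dv + (1+c^2)*E*T))
      / ((1+c^2)*E*U*(U^2-c^2*(E*S))) := by
    rw [eq_div_iff (by positivity)]
    linear_combination (U^2-c^2*(E*S))*hU32 - c^2*E*u 2 p*hAkey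
  have hMne : U^2 - c^2*(E*S) ≠ 0 := ne_of_gt hM0
  have hMne2 : U^2 - c^2*E*S ≠ 0 := by rw [mul_assoc]; exact hMne
  have hMne3 : -(E*S*c^2) + U^2 ≠ 0 := by rw [neg_add_eq_sub, mul_comm]; exact hMne
  refine ⟨⟨hq0, hq1, hqpos⟩, ?_, ?_, ?_⟩
  · -- ∂_t L
    rw [show u 0 p / U * pds 0 L p + u 1 p / U * pds 1 L p + u 2 p / U * pds 2 L p
        = P1 / U from by rw [hP1d]; ring]
    rw [hAfrac]
    field_simp
    ring
  · -- ∂_t u0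
    rw [hdu0', hYfrac]
    rw [show 1 - c^2*(E*S/U^2) = (U^2 - c^2*(E*S))/U^2 by field_simp]
    generalize hMg : U^2 - c^2*(E*S) = M at hMne ⊢
    field_simp
    rw [← hMg]
    ring
  · -- ∂_t u^j
    intro j
    fin_cases j <;> simp only [Fin.zero_eta, Fin.mk_one, Fin.reduceFinMk]
    · rw [show u 0 p / U * pds 0 (u 0) p + u 1 p / U * pds 1 (u 0) p + u 2 p / U * pds 2 (u 0) p
          = (u 0 p * pds 0 (u 0) p + u 1 p * pds 1 (u 0) p + u 2 p * pds 2 (u 0) p) / U from by ring]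
      rw [show u 0 p / U * pds 0 L p + u 1 p / U * pds 1 L p + u 2 p / U * pds 2 L p
          = P1 / U from by rw [hP1d]; ring]
      rw [hB0frac]
      field_simp
      ring
    · rw [show u 0 p / U * pds 0 (u 1) p + u 1 p / U * pds 1 (u 1) p + u 2 p / U * pds 2 (u 1) p
          = (u 0 p * pds 0 (u 1) p + u 1 p * pds 1 (u 1) p + u 2 p * pds 2 (u 1) p) / U from by ring]
      rw [show u 0 p / U * pds 0 L p + u 1 p / U * pds 1 L p + u 2 p / U * pds 2 L p
          = P1 / U from by rw [hP1d]; ring]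
      rw [hB1frac]
      field_simp
      ring
    · rw [show u 0 p / U * pds 0 (u 2) p + u 1 p / U * pds 1 (u 2) p + u 2 p / U * pds 2 (u 2) p
          = (u 0 p * pds 0 (u 2) p + u 1 p * pds 1 (u 2) p + u 2 p * pds 2 (u 2) p) / U from by ring]
      rw [show u 0 p / U * pds 0 L p + u 1 p / U * pds 1 L p + u 2 p / U * pds 2 L p
          = P1 / U from by rw [hP1d]; ring]
      rw [hB2frac]
      field_simp
      ring
end
end
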